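/- For every z ∈ F_2^n: if z is a solution of the Hidden Linear Function problem for q then |Γ(F_2^n, z)|^2 = 4^n / |L_q^⊥|, and otherwise Γ(F_2^n, z) = 0. (Equivalently, the distribution p(z) = |Γ(F_2^n, z)|^2 / 4^n is the uniform distribution on the set of all solutions.) -/

import Mathlib

open Finset

/-- The quadratic form q : F_2^n → Z_4. -/
def quadForm {n : ℕ} (A : Fin n → Fin n → ZMod 2) (b : Fin n → ZMod 2)
    (x : Fin n → ZMod 2) : ZMod 4 :=
  2 * ∑ p ∈ Finset.univ.filter (fun p : Fin n × Fin n => p.1 < p.2),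
      ((A p.1 p.2).val : ZMod 4) * ((x p.1).val : ZMod 4) * ((x p.2).val : ZMod 4)
  + ∑ α : Fin n, ((b α).val : ZMod 4) * ((x α).val : ZMod 4)

/-- The set L_q. -/
def Lset {n : ℕ} (A : Fin n → Fin n → ZMod 2) (b : Fin n → ZMod 2) :
    Set (Fin n → ZMod 2) :=
  {x | ∀ y, quadForm A b (x + y) = quadForm A b x + quadForm A b y}

/-- F_2 inner product. -/
def ip {n : ℕ} (z x : Fin n → ZMod 2) : ZMod 2 := ∑ α, z α * x α

/-- z is a solution of the Hidden Linear Function problem for q. -/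
def IsSol {n : ℕ} (A : Fin n → Fin n → ZMod 2) (b : Fin n → ZMod 2)
    (z : Fin n → ZMod 2) : Prop :=
  ∀ x ∈ Lset A b, quadForm A b x = 2 * ((ip z x).val : ZMod 4)

/-- Orthogonal complement of a set of vectors. -/
def perp {n : ℕ} (L : Set (Fin n → ZMod 2)) : Set (Fin n → ZMod 2) :=
  {y | ∀ x ∈ L, ip y x = 0}

/-- The partial Fourier transform Γ(L, z). -/
noncomputable def Gamma {n : ℕ} (A : Fin n → Fin n → ZMod 2) (b : Fin n → ZMod 2)
    (L : Set (Fin n → ZMod 2)) (z : Fin n → ZMod 2) : ℂ :=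
  ∑ x ∈ (Set.toFinite L).toFinset,
    (-1 : ℂ) ^ (ip z x).val * Complex.I ^ (quadForm A b x).val

/-! ### Auxiliary definitions -/

/-- The symmetric bilinear form associated with q. -/
def bil {n : ℕ} (A : Fin n → Fin n → ZMod 2) (b : Fin n → ZMod 2)
    (x y : Fin n → ZMod 2) : ZMod 2 :=
  ∑ p ∈ Finset.univ.filter (fun p : Fin n × Fin n => p.1 < p.2),
      A p.1 p.2 * (x p.1 * y p.2 + x p.2 * y p.1)
  + ∑ α : Fin n, b α * (x α * y α)

/-- The doubling homomorphism Z_2 → Z_4. -/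
def g4 : ZMod 2 →+ ZMod 4 where
  toFun := fun u => 2 * (u.val : ZMod 4)
  map_zero' := by decide
  map_add' := by decide

lemma g4_apply (u : ZMod 2) : g4 u = 2 * (u.val : ZMod 4) := rfl

/-- Halving map Z_4 ⊇ {0,2} → Z_2. -/
def h2 (m : ZMod 4) : ZMod 2 := ((m.val / 2 : ℕ) : ZMod 2)

/-! ### Power computations in ℂ -/

lemma Ipow_mod (j : ℕ) : Complex.I ^ j = Complex.I ^ (j % 4) := by
  conv_lhs => rw [← Nat.div_add_mod j 4, pow_add, pow_mul, Complex.I_pow_four, one_pow, one_mul]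

lemma Ipow_congr {j k : ℕ} (h : j % 4 = k % 4) : Complex.I ^ j = Complex.I ^ k := by
  rw [Ipow_mod j, Ipow_mod k, h]

lemma I_pow_val_add (a c : ZMod 4) :
    Complex.I ^ (a + c).val = Complex.I ^ a.val * Complex.I ^ c.val := by
  rw [← pow_add]
  exact Ipow_congr (by revert a c; decide)

lemma I_two_bit (u : ZMod 2) :
    Complex.I ^ ((2 * (u.val : ZMod 4)).val) = (((-1:ℝ) ^ u.val : ℝ) : ℂ) := by
  have h : (2 * (u.val : ZMod 4)).val = 2 * u.val := by revert u; decide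
  rw [h, pow_mul, Complex.I_sq]
  push_cast; ring

lemma I_val_spec (m : ZMod 4) (hm : 2 * m = 0) :
    Complex.I ^ m.val = (((-1:ℝ) ^ (h2 m).val : ℝ) : ℂ) := by
  have h : m.val = 2 * (h2 m).val := by revert hm; revert m; decide
  rw [h, pow_mul, Complex.I_sq]; push_cast; ring

lemma neg_one_pow_addR (u v : ZMod 2) :
    (-1:ℝ) ^ (u + v).val = (-1:ℝ) ^ u.val * (-1) ^ v.val := by
  rw [← pow_add, neg_one_pow_eq_pow_mod_two, neg_one_pow_eq_pow_mod_two (n := u.val + v.val)]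
  congr 1; revert u v; decide

lemma neg_one_pow_addC (u v : ZMod 2) :
    (-1:ℂ) ^ (u + v).val = (-1:ℂ) ^ u.val * (-1) ^ v.val := by
  rw [← pow_add, neg_one_pow_eq_pow_mod_two, neg_one_pow_eq_pow_mod_two (n := u.val + v.val)]
  congr 1; revert u v; decide

lemma h2_add (m m' : ZMod 4) (h : 2 * m = 0) (h' : 2 * m' = 0) :
    h2 (m + m') = h2 m + h2 m' := by
  revert h h'; revert m m'; decide

/-! ### Properties of quadForm and bil -/

lemma quadForm_add {n : ℕ} (A : Fin n → Fin n → ZMod 2) (b : Fin n → ZMod 2)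
    (x y : Fin n → ZMod 2) :
    quadForm A b (x + y) = quadForm A b x + quadForm A b y + g4 (bil A b x y) := by
  have key1 : ∀ a u v u' v' : ZMod 2,
      2 * ((a.val:ZMod 4) * ((u+u').val:ZMod 4) * ((v+v').val:ZMod 4))
        = 2*((a.val:ZMod 4) * (u.val:ZMod 4) * (v.val:ZMod 4))
          + 2*((a.val:ZMod 4) * (u'.val:ZMod 4) * (v'.val:ZMod 4))
          + g4 (a * (u * v' + v * u')) := by decide
  have key2 : ∀ c u u' : ZMod 2,
      ((c.val:ZMod 4)) * (((u + u').val:ZMod 4))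
        = (c.val:ZMod 4) * (u.val:ZMod 4) + (c.val:ZMod 4) * (u'.val:ZMod 4)
          + g4 (c * (u * u')) := by decide
  simp only [quadForm, bil, Pi.add_apply, map_add, map_sum, Finset.mul_sum]
  rw [Finset.sum_congr rfl (fun p _ => key1 (A p.1 p.2) (x p.1) (x p.2) (y p.1) (y p.2)),
      Finset.sum_congr rfl (fun α _ => key2 (b α) (x α) (y α))]
  simp only [Finset.sum_add_distrib]
  abel

lemma bil_add_left {n : ℕ} (A : Fin n → Fin n → ZMod 2) (b : Fin n → ZMod 2)
    (x x' y : Fin n → ZMod 2) :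
    bil A b (x + x') y = bil A b x y + bil A b x' y := by
  simp only [bil, Pi.add_apply]
  rw [Finset.sum_congr rfl (fun (p : Fin n × Fin n) _ =>
        (by ring : A p.1 p.2 * ((x p.1 + x' p.1) * y p.2 + (x p.2 + x' p.2) * y p.1)
          = A p.1 p.2 * (x p.1 * y p.2 + x p.2 * y p.1)
            + A p.1 p.2 * (x' p.1 * y p.2 + x' p.2 * y p.1))),
      Finset.sum_congr rfl (fun (α : Fin n) _ =>
        (by ring : b α * ((x α + x' α) * y α) = b α * (x α * y α) + b α * (x' α * y α)))]
  simp only [Finset.sum_add_distrib]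
  abel

lemma bil_symm {n : ℕ} (A : Fin n → Fin n → ZMod 2) (b : Fin n → ZMod 2)
    (x y : Fin n → ZMod 2) : bil A b x y = bil A b y x := by
  simp only [bil]
  congr 1
  · exact Finset.sum_congr rfl fun p _ => by ring
  · exact Finset.sum_congr rfl fun α _ => by ring

lemma bil_zero_left {n : ℕ} (A : Fin n → Fin n → ZMod 2) (b : Fin n → ZMod 2)
    (y : Fin n → ZMod 2) : bil A b 0 y = 0 := by
  simp [bil]

lemma quadForm_zero {n : ℕ} (A : Fin n → Fin n → ZMod 2) (b : Fin n → ZMod 2) :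
    quadForm A b 0 = 0 := by
  simp [quadForm]

lemma self_add_self {n : ℕ} (w : Fin n → ZMod 2) : w + w = 0 := by
  funext α; exact CharTwo.add_self_eq_zero _

lemma mem_Lset_iff {n : ℕ} (A : Fin n → Fin n → ZMod 2) (b : Fin n → ZMod 2)
    (x : Fin n → ZMod 2) : x ∈ Lset A b ↔ ∀ y, bil A b x y = 0 := by
  have hg : ∀ u : ZMod 2, g4 u = 0 ↔ u = 0 := by decide
  constructor
  · intro hx y
    have := hx y
    rw [quadForm_add] at this
    exact (hg _).mp (add_eq_left.mp this)
  · intro hx y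
    rw [quadForm_add, hx y, map_zero, add_zero]

lemma two_q_zero {n : ℕ} (A : Fin n → Fin n → ZMod 2) (b : Fin n → ZMod 2)
    (w : Fin n → ZMod 2) (hw : ∀ y, bil A b w y = 0) : 2 * quadForm A b w = 0 := by
  have h := quadForm_add A b w w
  rw [self_add_self, quadForm_zero, hw w, map_zero, add_zero] at h
  rw [two_mul]; exact h.symm

/-! ### Character sums -/

lemma char_sum {n : ℕ} (s : Finset (Fin n → ZMod 2)) (φ : (Fin n → ZMod 2) → ZMod 2)
    (hs : ∀ x ∈ s, ∀ y ∈ s, x + y ∈ s)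
    (hφ : ∀ x ∈ s, ∀ y ∈ s, φ (x + y) = φ x + φ y) :
    ∑ x ∈ s, (-1:ℝ) ^ (φ x).val = if ∀ x ∈ s, φ x = 0 then (s.card : ℝ) else 0 := by
  split_ifs with h
  · rw [Finset.sum_congr rfl (fun x hx => by simp [h x hx] : ∀ x ∈ s, (-1:ℝ)^(φ x).val = 1)]
    simp
  · push_neg at h
    obtain ⟨w, hw, hw0⟩ := h
    have hw1 : φ w = 1 := by
      have : ∀ u : ZMod 2, u ≠ 0 → u = 1 := by decide
      exact this _ hw0
    have hww : w + w = 0 := self_add_self w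
    have hstep : ∑ x ∈ s, (-1:ℝ) ^ (φ x).val = ∑ x ∈ s, (-1:ℝ) ^ (φ (x + w)).val := by
      refine (Finset.sum_nbij' (fun x => x + w) (fun x => x + w) ?_ ?_ ?_ ?_ ?_).symm
      · intro a ha; exact hs a ha w hw
      · intro a ha; exact hs a ha w hw
      · intro a _; show a + w + w = a; rw [add_assoc, hww, add_zero]
      · intro a _; show a + w + w = a; rw [add_assoc, hww, add_zero]
      · intro a _; rfl
    have hval : ∀ x ∈ s, (-1:ℝ) ^ (φ (x + w)).val = -(-1:ℝ) ^ (φ x).val := by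
      intro x hx
      rw [hφ x hx w hw, hw1]
      rcases (by decide :
          ∀ u : ZMod 2, ((u+1).val = 1 ∧ u.val = 0) ∨ ((u+1).val = 0 ∧ u.val = 1)) (φ x) with
        ⟨h1, h2⟩ | ⟨h1, h2⟩ <;> rw [h1, h2] <;> norm_num
    rw [Finset.sum_congr rfl hval] at hstep
    have h2 : ∑ x ∈ s, -(-1:ℝ) ^ (φ x).val = -∑ x ∈ s, (-1:ℝ) ^ (φ x).val := by
      rw [Finset.sum_neg_distrib]
    rw [h2] at hstep
    linarith

/-! ### ip lemmas -/

lemma ip_add_right {n : ℕ} (z x y : Fin n → ZMod 2) : ip z (x + y) = ip z x + ip z y := by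
  simp only [ip, Pi.add_apply, mul_add]
  rw [Finset.sum_add_distrib]

lemma ip_add_left {n : ℕ} (x y z : Fin n → ZMod 2) : ip (x + y) z = ip x z + ip y z := by
  simp only [ip, Pi.add_apply, add_mul]
  rw [Finset.sum_add_distrib]

lemma ip_single {n : ℕ} (α : Fin n) (x : Fin n → ZMod 2) :
    ip (Pi.single α 1) x = x α := by
  simp only [ip, Pi.single_apply, ite_mul, one_mul, zero_mul]
  rw [Finset.sum_ite_eq' Finset.univ α x]
  simp

lemma card_G {n : ℕ} : Fintype.card (Fin n → ZMod 2) = 2 ^ n := by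
  simp [Fintype.card_fun]

/-- If z is a solution of the Hidden Linear Function problem for q
then |Γ(F_2^n, z)|² = 4^n / |L_q^⊥|, and otherwise Γ(F_2^n, z) = 0; i.e. the
distribution p(z) = |Γ(F_2^n, z)|²/4^n is uniform on the set of solutions. -/
theorem Gamma_full_space (n : ℕ) (hn : 1 ≤ n)
    (A : Fin n → Fin n → ZMod 2) (b : Fin n → ZMod 2) (z : Fin n → ZMod 2) :
    (IsSol A b z →
      (‖Gamma A b Set.univ z‖) ^ 2
        = 4 ^ n / (Nat.card ↥(perp (Lset A b)) : ℝ)) ∧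
    (¬ IsSol A b z → Gamma A b Set.univ z = 0) := by
  classical
  set q := quadForm A b with hq
  set F : (Fin n → ZMod 2) → ℂ :=
    fun x => (-1:ℂ) ^ (ip z x).val * Complex.I ^ (q x).val with hF
  set L : Finset (Fin n → ZMod 2) :=
    Finset.univ.filter (fun w => ∀ y, bil A b w y = 0) with hL
  set φ : (Fin n → ZMod 2) → ZMod 2 := fun w => ip z w + h2 (q w) with hφdef
  -- Gamma as a full sum
  have hG : Gamma A b Set.univ z = ∑ x : Fin n → ZMod 2, F x := by
    rw [Gamma, Set.Finite.toFinset_univ]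
  -- unit property
  have hunit : ∀ y, F y * (starRingEnd ℂ) (F y) = 1 := by
    intro y
    have habs : ‖F y‖ = 1 := by
      rw [hF]
      simp [map_mul, map_pow]
    rw [Complex.mul_conj, ← Complex.sq_norm, habs]
    norm_num
  -- multiplication rule
  have hFmul : ∀ y w, F (y + w) * (starRingEnd ℂ) (F y)
      = (((-1:ℝ) ^ (bil A b y w).val : ℝ) : ℂ) * F w := by
    intro y w
    have hFe : F (y + w) = (((-1:ℝ) ^ (bil A b y w).val : ℝ) : ℂ) * F w * F y := by
      rw [hF]
      simp only
      rw [ip_add_right, hq, quadForm_add, neg_one_pow_addC, I_pow_val_add, I_pow_val_add,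
        g4_apply, I_two_bit]
      ring
    calc F (y + w) * (starRingEnd ℂ) (F y)
        = (((-1:ℝ) ^ (bil A b y w).val : ℝ) : ℂ) * F w * (F y * (starRingEnd ℂ) (F y)) := by
          rw [hFe]; ring
      _ = (((-1:ℝ) ^ (bil A b y w).val : ℝ) : ℂ) * F w := by rw [hunit]; ring
  -- the big computation
  have key : Gamma A b Set.univ z * (starRingEnd ℂ) (Gamma A b Set.univ z)
      = (2^n : ℂ) * ((∑ w ∈ L, (-1:ℝ) ^ (φ w).val : ℝ) : ℂ) := by
    rw [hG, map_sum, Finset.sum_mul_sum]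
    rw [Finset.sum_comm]
    have hy : ∀ y : Fin n → ZMod 2,
        ∑ x : Fin n → ZMod 2, F x * (starRingEnd ℂ) (F y)
          = ∑ w : Fin n → ZMod 2, (((-1:ℝ) ^ (bil A b y w).val : ℝ) : ℂ) * F w := by
      intro y
      rw [← Fintype.sum_equiv (Equiv.addLeft y)
        (fun w => F (y + w) * (starRingEnd ℂ) (F y))
        (fun x => F x * (starRingEnd ℂ) (F y)) (fun w => rfl)]
      exact Finset.sum_congr rfl fun w _ => hFmul y w
    rw [Finset.sum_congr rfl fun y _ => hy y]
    rw [Finset.sum_comm]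
    have hw : ∀ w : Fin n → ZMod 2,
        ∑ y : Fin n → ZMod 2, (((-1:ℝ) ^ (bil A b y w).val : ℝ) : ℂ) * F w
          = (if w ∈ L then (2^n : ℂ) else 0) * F w := by
      intro w
      rw [← Finset.sum_mul]
      congr 1
      rw [← Complex.ofReal_sum]
      rw [char_sum Finset.univ (fun y => bil A b y w)
        (fun _ _ _ _ => Finset.mem_univ _)
        (fun x _ y _ => bil_add_left A b x y w)]
      have hcond : (∀ x ∈ Finset.univ, bil A b x w = 0) ↔ w ∈ L := by
        rw [hL, Finset.mem_filter]
        constructor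
        · intro h; exact ⟨Finset.mem_univ _, fun y => (bil_symm A b w y) ▸ h y (Finset.mem_univ _)⟩
        · intro h y _; rw [bil_symm]; exact h.2 y
      by_cases hmem : w ∈ L
      · rw [if_pos (hcond.mpr hmem), if_pos hmem, Finset.card_univ, card_G]
        push_cast; ring
      · rw [if_neg (fun h => hmem (hcond.mp h)), if_neg hmem]
        norm_num
    rw [Finset.sum_congr rfl fun w _ => hw w]
    simp only [ite_mul, zero_mul]
    rw [Finset.sum_ite_mem, Finset.univ_inter, ← Finset.mul_sum]
    congr 1
    rw [Complex.ofReal_sum]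
    refine Finset.sum_congr rfl fun w hw => ?_
    have h2q : 2 * q w = 0 := two_q_zero A b w ((Finset.mem_filter.mp hw).2)
    rw [hF]
    simp only
    rw [I_val_spec (q w) h2q, hφdef]
    simp only
    rw [neg_one_pow_addR]
    push_cast
    ring
  -- L is closed under addition
  have hLclosed : ∀ x ∈ L, ∀ y ∈ L, x + y ∈ L := by
    intro x hx y hy
    rw [hL, Finset.mem_filter] at hx hy ⊢
    exact ⟨Finset.mem_univ _, fun y' => by rw [bil_add_left, hx.2 y', hy.2 y', add_zero]⟩
  have hmemL : ∀ x, x ∈ L ↔ ∀ y, bil A b x y = 0 := by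
    intro x; rw [hL, Finset.mem_filter]
    exact ⟨fun h => h.2, fun h => ⟨Finset.mem_univ _, h⟩⟩
  -- φ is additive on L
  have hφadd : ∀ x ∈ L, ∀ y ∈ L, φ (x + y) = φ x + φ y := by
    intro x hx y hy
    have hx2 := (hmemL x).mp hx
    have hy2 := (hmemL y).mp hy
    rw [hφdef]
    simp only
    rw [ip_add_right, hq, quadForm_add, hx2 y, map_zero, add_zero,
        h2_add _ _ (two_q_zero A b x hx2) (two_q_zero A b y hy2)]
    ring
  have hchar := char_sum L φ hLclosed hφadd
  -- solution characterisation
  have hSol_iff : IsSol A b z ↔ ∀ w ∈ L, φ w = 0 := by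
    have hdec : ∀ (m : ZMod 4) (u : ZMod 2), 2*m = 0 →
        (m = 2*(u.val:ZMod 4) ↔ u + h2 m = 0) := by decide
    constructor
    · intro hsol w hwL
      have hb := (hmemL w).mp hwL
      have := hsol w ((mem_Lset_iff A b w).mpr hb)
      exact (hdec (q w) (ip z w) (two_q_zero A b w hb)).mp this
    · intro h x hx
      have hb := (mem_Lset_iff A b x).mp hx
      exact (hdec (q x) (ip z x) (two_q_zero A b x hb)).mpr (h x ((hmemL x).mpr hb))
  -- the orthogonal complement as a finset
  set P : Finset (Fin n → ZMod 2) :=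
    Finset.univ.filter (fun y => ∀ w ∈ L, ip y w = 0) with hP
  have hmemP : ∀ y, y ∈ P ↔ ∀ w ∈ L, ip y w = 0 := by
    intro y; rw [hP, Finset.mem_filter]
    exact ⟨fun h => h.2, fun h => ⟨Finset.mem_univ _, h⟩⟩
  -- duality count: |P| * |L| = 2^n
  have hPL : ((P.card : ℝ)) * (L.card : ℝ) = 2^n := by
    have T1 : ∑ y : Fin n → ZMod 2, ∑ w ∈ L, (-1:ℝ)^(ip y w).val
        = (P.card : ℝ) * (L.card : ℝ) := by
      rw [Finset.sum_congr rfl fun y _ => char_sum L (fun w => ip y w) hLclosed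
        (fun x _ y' _ => ip_add_right y x y')]
      rw [Finset.sum_congr rfl fun y _ =>
        (if_congr (Iff.symm (hmemP y)) rfl rfl :
          (if ∀ w ∈ L, ip y w = 0 then (L.card : ℝ) else 0)
            = (if y ∈ P then (L.card : ℝ) else 0))]
      rw [Finset.sum_ite_mem, Finset.univ_inter, Finset.sum_const, nsmul_eq_mul]
    have hzero : ∀ w : Fin n → ZMod 2, (∀ y ∈ Finset.univ, ip y w = 0) ↔ w = 0 := by
      intro w
      constructor
      · intro h
        funext α
        have := h (Pi.single α 1) (Finset.mem_univ _)
        rwa [ip_single] at this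
      · intro h y _
        rw [h]; simp [ip]
    have T2 : ∑ y : Fin n → ZMod 2, ∑ w ∈ L, (-1:ℝ)^(ip y w).val = 2^n := by
      rw [Finset.sum_comm]
      rw [Finset.sum_congr rfl fun w _ => char_sum Finset.univ (fun y => ip y w)
        (fun _ _ _ _ => Finset.mem_univ _)
        (fun x _ y' _ => ip_add_left x y' w)]
      rw [Finset.sum_congr rfl fun w _ =>
        (if_congr (hzero w) rfl rfl :
          (if ∀ y ∈ Finset.univ, ip y w = 0 then ((Finset.univ.card : ℝ)) else 0)
            = (if w = 0 then ((Finset.univ.card : ℝ)) else 0))]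
      rw [Finset.sum_ite_eq' L 0 (fun _ => ((Finset.univ.card : ℝ)))]
      rw [if_pos ((hmemL 0).mpr (bil_zero_left A b)), Finset.card_univ, card_G]
      push_cast; ring
    rw [← T1, T2]
  have hPne : (P.card : ℝ) ≠ 0 := by
    intro h0
    rw [h0, zero_mul] at hPL
    have : (0:ℝ) < 2^n := by positivity
    linarith
  have hperp : perp (Lset A b) = (↑P : Set (Fin n → ZMod 2)) := by
    ext y
    simp only [perp, Set.mem_setOf_eq, Finset.mem_coe]
    rw [hmemP y]
    constructor
    · intro h w hwL
      exact h w ((mem_Lset_iff A b w).mpr ((hmemL w).mp hwL))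
    · intro h x hx
      exact h x ((hmemL x).mpr ((mem_Lset_iff A b x).mp hx))
  have hcardP : ((Nat.card ↥(perp (Lset A b)) : ℝ)) = (P.card : ℝ) := by
    rw [hperp, Nat.card_coe_set_eq, Set.ncard_coe_finset]
  constructor
  · intro hsol
    have hkey2 : Gamma A b Set.univ z * (starRingEnd ℂ) (Gamma A b Set.univ z)
        = ((2^n * L.card : ℝ) : ℂ) := by
      rw [key, hchar, if_pos (hSol_iff.mp hsol)]
      push_cast; ring
    have habs2 : (‖Gamma A b Set.univ z‖)^2 = 2^n * (L.card : ℝ) := by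
      rw [Complex.mul_conj, ← Complex.sq_norm] at hkey2
      exact_mod_cast hkey2
    rw [habs2, hcardP]
    field_simp
    have h4 : (4:ℝ)^n = 2^n * 2^n := by
      rw [show (4:ℝ) = 2*2 by norm_num, mul_pow]
    rw [h4]
    linear_combination (2:ℝ)^n * hPL
  · intro hnsol
    have hkey2 : Gamma A b Set.univ z * (starRingEnd ℂ) (Gamma A b Set.univ z) = 0 := by
      rw [key, hchar, if_neg (fun h => hnsol (hSol_iff.mpr h))]
      push_cast; ring
    rcases mul_eq_zero.mp hkey2 with h | h
    · exact h
    · exact star_eq_zero.mp h
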